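/- Let x_1,…,x_n ∈ ℝ^d, y_1,…,y_n ∈ {−1,+1}, let ℓ(w) = ∑_{i=1}^n log(1 + exp(−y_i⟨x_i, w⟩)) be the binary logistic regression loss, let ℓ_* = inf ℓ, and let X be the n×d matrix with rows x_1ᵀ,…,x_nᵀ with spectral (operator) norm ‖X‖. Then: (i) ‖∇ℓ(u) − ∇ℓ(v)‖ ≤ (1/4)‖X‖²·‖u − v‖ for all u, v ∈ ℝ^d; and (ii) for every δ > 0, ‖∇ℓ(u) − ∇ℓ(v)‖ ≤ (ℓ_* + δ)‖X‖²·‖u − v‖ for all u, v in the sublevel set {w : ℓ(w) − ℓ_* ≤ δ}. In other words, ℓ is glocally ((1/4)‖X‖², (ℓ_* + δ)‖X‖², δ)-smooth for all δ > 0. -/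

import Mathlib

open scoped RealInnerProductSpace

noncomputable def lrSig (t : ℝ) : ℝ := Real.exp t / (1 + Real.exp t)
noncomputable def lrSigp (t : ℝ) : ℝ := Real.exp t / (1 + Real.exp t)^2

lemma lrOneAddExpPos (t : ℝ) : 0 < 1 + Real.exp t := by positivity

lemma lrHasDerivAt_sig (t : ℝ) : HasDerivAt lrSig (lrSigp t) t := by
  have h := (Real.hasDerivAt_exp t).div ((hasDerivAt_const t (1:ℝ)).add (Real.hasDerivAt_exp t))
    (ne_of_gt (lrOneAddExpPos t))
  refine h.congr_deriv ?_
  simp only [Pi.add_apply, zero_add]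
  have := (lrOneAddExpPos t).ne'
  unfold lrSigp
  ring

lemma lrSigp_nonneg (t : ℝ) : 0 ≤ lrSigp t := by unfold lrSigp; positivity

lemma lrHasDerivAt_phi (c t : ℝ) :
    HasDerivAt (fun t => Real.log (1 + Real.exp (c*t))) (c * lrSig (c*t)) t := by
  have h1 : HasDerivAt (fun t : ℝ => c * t) c t := by
    simpa using (hasDerivAt_id t).const_mul c
  have h2 : HasDerivAt (fun s : ℝ => 1 + Real.exp s) (Real.exp (c*t)) (c*t) := by
    exact (Real.hasDerivAt_exp (c*t)).const_add 1
  have h3 := ((h2.comp t h1).log (lrOneAddExpPos (c*t)).ne')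
  refine h3.congr_deriv ?_
  simp only [Function.comp_apply]
  unfold lrSig; field_simp

lemma lrHasDerivAt_psi (c t : ℝ) :
    HasDerivAt (fun t => c * lrSig (c*t)) (c^2 * lrSigp (c*t)) t := by
  have h1 : HasDerivAt (fun t : ℝ => c * t) c t := by
    simpa using (hasDerivAt_id t).const_mul c
  have h2 := ((lrHasDerivAt_sig (c*t)).comp t h1).const_mul c
  refine h2.congr_deriv ?_
  ring

lemma lrPhi'_lip (c K a b : ℝ) (hc : c^2 = 1)
    (hK : ∀ t ∈ Set.uIcc a b, lrSigp (c*t) ≤ K) :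
    |c * lrSig (c*a) - c * lrSig (c*b)| ≤ K * |a - b| := by
  have h := Convex.norm_image_sub_le_of_norm_hasDerivWithin_le
    (f := fun t => c * lrSig (c*t)) (f' := fun t => c^2 * lrSigp (c*t))
    (s := Set.uIcc a b) (C := K)
    (fun t _ => (lrHasDerivAt_psi c t).hasDerivWithinAt)
    (fun t ht => by
      simp only [Real.norm_eq_abs, hc, one_mul]
      rw [abs_of_nonneg (lrSigp_nonneg _)]
      exact hK t ht)
    (convex_uIcc a b) (Set.right_mem_uIcc) (Set.left_mem_uIcc)
  simpa [Real.norm_eq_abs] using h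

lemma lrHasGradientAt {n d : ℕ} (x : Fin n → EuclideanSpace ℝ (Fin d)) (y : Fin n → ℝ)
    (w : EuclideanSpace ℝ (Fin d)) :
    HasGradientAt (fun w => ∑ i, Real.log (1 + Real.exp (-(y i) * ⟪x i, w⟫)))
      (∑ i, ((-(y i)) * lrSig ((-(y i)) * ⟪x i, w⟫)) • x i) w := by
  rw [hasGradientAt_iff_hasFDerivAt]
  have hterm : ∀ i : Fin n, HasFDerivAt (fun w : EuclideanSpace ℝ (Fin d) =>
      Real.log (1 + Real.exp (-(y i) * ⟪x i, w⟫)))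
      (((-(y i)) * lrSig ((-(y i)) * ⟪x i, w⟫)) • (innerSL ℝ (x i))) w := by
    intro i
    exact (lrHasDerivAt_phi (-(y i)) ⟪x i, w⟫).comp_hasFDerivAt w
      ((innerSL ℝ (x i)).hasFDerivAt)
  have hsum := HasFDerivAt.fun_sum (u := Finset.univ) (fun i _ => hterm i)
  refine hsum.congr_fderiv ?_
  symm
  apply ContinuousLinearMap.ext
  intro z
  simp only [InnerProductSpace.toDual_apply_apply, ContinuousLinearMap.sum_apply,
    ContinuousLinearMap.coe_smul', Pi.smul_apply, innerSL_apply_apply, smul_eq_mul]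
  rw [sum_inner]
  congr 1
  ext i
  rw [real_inner_smul_left]

lemma lrAdjointApply {n d : ℕ} (x : Fin n → EuclideanSpace ℝ (Fin d))
    (X : EuclideanSpace ℝ (Fin d) →L[ℝ] EuclideanSpace ℝ (Fin n))
    (hX : ∀ (w : EuclideanSpace ℝ (Fin d)) (i : Fin n), X w i = ⟪x i, w⟫)
    (e : EuclideanSpace ℝ (Fin n)) :
    (ContinuousLinearMap.adjoint X) e = ∑ i, e i • x i := by
  apply ext_inner_right ℝ
  intro z
  rw [ContinuousLinearMap.adjoint_inner_left, sum_inner]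
  simp only [real_inner_smul_left]
  rw [PiLp.inner_apply]
  apply Finset.sum_congr rfl
  intro i _
  simp [hX, RCLike.inner_apply, mul_comm]

lemma lrMul_le_max (c a b t : ℝ) (h : t ∈ Set.uIcc a b) : c*t ≤ max (c*a) (c*b) := by
  rcases Set.mem_uIcc.mp h with ⟨h1, h2⟩ | ⟨h1, h2⟩ <;> rcases le_total 0 c with hc | hc
  · exact le_max_of_le_right (by nlinarith)
  · exact le_max_of_le_left (by nlinarith)
  · exact le_max_of_le_left (by nlinarith)
  · exact le_max_of_le_right (by nlinarith)

lemma lrGmono : Monotone (fun s : ℝ => Real.log (1 + Real.exp s)) := by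
  intro s t h
  apply Real.log_le_log (lrOneAddExpPos s)
  have := Real.exp_le_exp.mpr h
  linarith

lemma lrKey {n d : ℕ} (x : Fin n → EuclideanSpace ℝ (Fin d)) (y : Fin n → ℝ)
    (hy : ∀ i, y i = 1 ∨ y i = -1)
    (ℓ : EuclideanSpace ℝ (Fin d) → ℝ)
    (hℓ : ℓ = fun w => ∑ i, Real.log (1 + Real.exp (-(y i) * ⟪x i, w⟫)))
    (X : EuclideanSpace ℝ (Fin d) →L[ℝ] EuclideanSpace ℝ (Fin n))
    (hX : ∀ (w : EuclideanSpace ℝ (Fin d)) (i : Fin n), X w i = ⟪x i, w⟫)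
    (K : ℝ) (hK0 : 0 ≤ K) (u v : EuclideanSpace ℝ (Fin d))
    (hK : ∀ i, ∀ t ∈ Set.uIcc (⟪x i, u⟫ : ℝ) (⟪x i, v⟫ : ℝ), lrSigp ((-(y i))*t) ≤ K) :
    ‖gradient ℓ u - gradient ℓ v‖ ≤ K * ‖X‖^2 * ‖u - v‖ := by
  have hgu : gradient ℓ u = ∑ i, ((-(y i)) * lrSig ((-(y i)) * ⟪x i, u⟫)) • x i := by
    rw [hℓ]; exact (lrHasGradientAt x y u).gradient
  have hgv : gradient ℓ v = ∑ i, ((-(y i)) * lrSig ((-(y i)) * ⟪x i, v⟫)) • x i := by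
    rw [hℓ]; exact (lrHasGradientAt x y v).gradient
  set e : EuclideanSpace ℝ (Fin n) := WithLp.toLp 2 fun i =>
    ((-(y i)) * lrSig ((-(y i)) * ⟪x i, u⟫)) - ((-(y i)) * lrSig ((-(y i)) * ⟪x i, v⟫)) with he
  have hsub : gradient ℓ u - gradient ℓ v = (ContinuousLinearMap.adjoint X) e := by
    rw [hgu, hgv, lrAdjointApply x X hX e, ← Finset.sum_sub_distrib]
    exact Finset.sum_congr rfl fun i _ => (sub_smul _ _ _).symm
  have hXuv : ‖X u - X v‖ ≤ ‖X‖ * ‖u - v‖ := by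
    rw [← map_sub]; exact X.le_opNorm _
  have hei : ∀ i : Fin n, ‖e i‖ ≤ K * ‖(X u - X v) i‖ := by
    intro i
    have hc : (-(y i))^2 = 1 := by rcases hy i with h | h <;> rw [h] <;> norm_num
    have h := lrPhi'_lip (-(y i)) K (⟪x i, u⟫ : ℝ) (⟪x i, v⟫ : ℝ) hc (hK i)
    have hXi : (X u - X v) i = (⟪x i, u⟫ : ℝ) - (⟪x i, v⟫ : ℝ) := by
      simp [hX]
    rw [Real.norm_eq_abs, Real.norm_eq_abs, hXi]
    exact h
  have henorm : ‖e‖ ≤ K * ‖X u - X v‖ := by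
    rw [EuclideanSpace.norm_eq, EuclideanSpace.norm_eq]
    have hKs : K * Real.sqrt (∑ i, ‖(X u - X v) i‖^2)
        = Real.sqrt (K^2 * ∑ i, ‖(X u - X v) i‖^2) := by
      rw [Real.sqrt_mul (sq_nonneg K), Real.sqrt_sq hK0]
    rw [hKs]
    apply Real.sqrt_le_sqrt
    rw [Finset.mul_sum]
    apply Finset.sum_le_sum
    intro i _
    have := hei i
    have h1 : (0:ℝ) ≤ ‖e i‖ := norm_nonneg _
    nlinarith [norm_nonneg ((X u - X v) i)]
  have hadj : ‖(ContinuousLinearMap.adjoint X) e‖ ≤ ‖X‖ * ‖e‖ := by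
    calc ‖(ContinuousLinearMap.adjoint X) e‖
        ≤ ‖ContinuousLinearMap.adjoint X‖ * ‖e‖ := (ContinuousLinearMap.adjoint X).le_opNorm e
      _ = ‖X‖ * ‖e‖ := by
          rw [LinearIsometryEquiv.norm_map ContinuousLinearMap.adjoint X]
  rw [hsub]
  calc ‖(ContinuousLinearMap.adjoint X) e‖ ≤ ‖X‖ * ‖e‖ := hadj
    _ ≤ ‖X‖ * (K * ‖X u - X v‖) := by
        apply mul_le_mul_of_nonneg_left henorm (norm_nonneg X)
    _ ≤ ‖X‖ * (K * (‖X‖ * ‖u - v‖)) := by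
        apply mul_le_mul_of_nonneg_left _ (norm_nonneg X)
        exact mul_le_mul_of_nonneg_left hXuv hK0
    _ = K * ‖X‖^2 * ‖u - v‖ := by ring

lemma lrSigp_le_quarter (t : ℝ) : lrSigp t ≤ 1/4 := by
  unfold lrSigp
  rw [div_le_iff₀ (by positivity)]
  nlinarith [sq_nonneg (1 - Real.exp t), Real.exp_pos t]

lemma lrSig_le_log (t : ℝ) : lrSig t ≤ Real.log (1 + Real.exp t) := by
  have hu : (0:ℝ) < 1 + Real.exp t := lrOneAddExpPos t
  have h := Real.log_le_sub_one_of_pos (x := (1 + Real.exp t)⁻¹) (by positivity)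
  rw [Real.log_inv] at h
  have : lrSig t = 1 - (1 + Real.exp t)⁻¹ := by
    unfold lrSig; field_simp; ring
  linarith

lemma lrSigp_le_log (t : ℝ) : lrSigp t ≤ Real.log (1 + Real.exp t) := by
  refine le_trans ?_ (lrSig_le_log t)
  unfold lrSigp lrSig
  have h1 : (0:ℝ) < 1 + Real.exp t := lrOneAddExpPos t
  gcongr
  nlinarith [Real.exp_pos t]

/-- The binary logistic regression loss is glocally
((1/4)‖X‖², (ℓ_* + δ)‖X‖², δ)-smooth for all δ > 0, where ‖X‖ is the spectral norm of
the data matrix (represented by the continuous linear map w ↦ (⟨x_i, w⟩)_i). -/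
theorem logistic_regression_glocal_smooth {n d : ℕ}
    (x : Fin n → EuclideanSpace ℝ (Fin d)) (y : Fin n → ℝ)
    (hy : ∀ i, y i = 1 ∨ y i = -1)
    (ℓ : EuclideanSpace ℝ (Fin d) → ℝ)
    (hℓ : ℓ = fun w => ∑ i, Real.log (1 + Real.exp (-(y i) * ⟪x i, w⟫)))
    (lstar : ℝ) (hlstar : IsGLB (Set.range ℓ) lstar)
    (X : EuclideanSpace ℝ (Fin d) →L[ℝ] EuclideanSpace ℝ (Fin n))
    (hX : ∀ (w : EuclideanSpace ℝ (Fin d)) (i : Fin n), X w i = ⟪x i, w⟫) :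
    (∀ u v, ‖gradient ℓ u - gradient ℓ v‖ ≤ 1 / 4 * ‖X‖ ^ 2 * ‖u - v‖) ∧
    (∀ δ : ℝ, 0 < δ → ∀ u v, ℓ u - lstar ≤ δ → ℓ v - lstar ≤ δ →
      ‖gradient ℓ u - gradient ℓ v‖ ≤ (lstar + δ) * ‖X‖ ^ 2 * ‖u - v‖) := by
  constructor
  · intro u v
    exact lrKey x y hy ℓ hℓ X hX (1/4) (by norm_num) u v
      (fun i t _ => lrSigp_le_quarter _)
  · intro δ hδ u v hu hv
    have hl0 : ∀ w, 0 ≤ ℓ w := by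
      intro w
      rw [hℓ]
      apply Finset.sum_nonneg
      intro i _
      apply Real.log_nonneg
      have := (Real.exp_pos (-(y i) * ⟪x i, w⟫)).le
      linarith
    have hls : 0 ≤ lstar := by
      apply hlstar.2
      rintro r ⟨w, rfl⟩
      exact hl0 w
    apply lrKey x y hy ℓ hℓ X hX (lstar + δ) (by linarith) u v
    intro i t ht
    have h1 : lrSigp (-(y i) * t) ≤ Real.log (1 + Real.exp (-(y i) * t)) := lrSigp_le_log _
    have h2 : -(y i) * t ≤ max (-(y i) * ⟪x i, u⟫) (-(y i) * ⟪x i, v⟫) :=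
      lrMul_le_max _ _ _ _ ht
    have h3 : Real.log (1 + Real.exp (-(y i) * t)) ≤
        max (Real.log (1 + Real.exp (-(y i) * ⟪x i, u⟫)))
            (Real.log (1 + Real.exp (-(y i) * ⟪x i, v⟫))) := by
      rw [← lrGmono.map_max]
      exact lrGmono h2
    have hterm : ∀ w : EuclideanSpace ℝ (Fin d),
        Real.log (1 + Real.exp (-(y i) * ⟪x i, w⟫)) ≤ ℓ w := by
      intro w
      rw [hℓ]
      apply Finset.single_le_sum (f := fun j => Real.log (1 + Real.exp (-(y j) * ⟪x j, w⟫)))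
        (fun j _ => ?_) (Finset.mem_univ i)
      apply Real.log_nonneg
      have := (Real.exp_pos (-(y j) * ⟪x j, w⟫)).le
      linarith
    have h4 : max (Real.log (1 + Real.exp (-(y i) * ⟪x i, u⟫)))
        (Real.log (1 + Real.exp (-(y i) * ⟪x i, v⟫))) ≤ lstar + δ := by
      apply max_le
      · linarith [hterm u]
      · linarith [hterm v]
    linarith
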